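/- Let ε be a real number with 0 < ε ≤ 1/20 and let G : ℝ → ℝ be a differentiable function such that: G(θ + 2π) = G(θ) for all θ; G(θ) ≤ 1 for all θ; G(θ_0) = 1 for some θ_0 ∈ ℝ; and G(θ)²·G′(θ)² ≤ ε²·(G(θ)² + G′(θ)²) for all θ. Then G(θ) ≥ 1 − 4ε for all θ ∈ ℝ. -/

import Mathlib

open Set

set_option maxHeartbeats 1000000

/-- Key lemma: if `G a = 1` and `θ₁ ∈ [a, a + π]`, then `G θ₁ ≥ 1 - 4ε`. -/
lemma stmt_15_key (ε : ℝ) (hε0 : 0 < ε) (hε : ε ≤ 1 / 20)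
    (G : ℝ → ℝ) (hG : Differentiable ℝ G)
    (hle : ∀ θ : ℝ, G θ ≤ 1)
    (hgnp : ∀ θ : ℝ, (G θ) ^ 2 * (deriv G θ) ^ 2 ≤ ε ^ 2 * ((G θ) ^ 2 + (deriv G θ) ^ 2))
    (a θ₁ : ℝ) (ha : G a = 1) (h1 : a ≤ θ₁) (h2 : θ₁ ≤ a + Real.pi) :
    1 - 4 * ε ≤ G θ₁ := by
  by_contra hcon
  push_neg at hcon
  set S : Set ℝ := Icc a θ₁ ∩ G ⁻¹' (Iic (1 - 4 * ε)) with hS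
  have hSclosed : IsClosed S :=
    isClosed_Icc.inter (IsClosed.preimage hG.continuous isClosed_Iic)
  have hSne : S.Nonempty := ⟨θ₁, ⟨h1, le_refl _⟩, le_of_lt hcon⟩
  have hSbdd : BddBelow S := ⟨a, fun x hx => hx.1.1⟩
  set c := sInf S with hc
  have hcS : c ∈ S := hSclosed.csInf_mem hSne hSbdd
  have hac : a < c := by
    rcases lt_or_eq_of_le hcS.1.1 with h | h
    · exact h
    · exfalso
      have := hcS.2
      rw [← h] at this
      simp only [mem_preimage, mem_Iic, ha] at this
      linarith
  -- on (a, c), G > 1 - 4ε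
  have hmid : ∀ θ ∈ Ioo a c, 1 - 4 * ε < G θ := by
    intro θ hθ
    by_contra h
    push_neg at h
    have : θ ∈ S := ⟨⟨le_of_lt hθ.1, le_trans (le_of_lt hθ.2) hcS.1.2⟩, h⟩
    exact absurd (csInf_le hSbdd this) (not_le.mpr hθ.2)
  -- MVT
  obtain ⟨ξ, hξ, hslope⟩ := exists_deriv_eq_slope G hac
    (hG.continuous.continuousOn) (hG.differentiableOn)
  have hGξ : 4 / 5 ≤ G ξ := by
    have := hmid ξ hξ
    linarith
  have hGξ1 : G ξ ≤ 1 := hle ξ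
  have hGc : G c ≤ 1 - 4 * ε := hcS.2
  have ht : 0 < c - a := by linarith [hac]
  have htπ : c - a ≤ Real.pi := by linarith [hcS.1.2, h2]
  have hds : deriv G ξ * (c - a) = G c - G a := by
    rw [hslope]; field_simp
  have hd16 : 16 * ε ^ 2 ≤ (deriv G ξ) ^ 2 * (c - a) ^ 2 := by
    have h4 : deriv G ξ * (c - a) ≤ -(4 * ε) := by rw [hds, ha]; linarith
    nlinarith [sq_nonneg (deriv G ξ * (c - a) + 4 * ε)]
  -- GNP bound at ξ
  have hgnpξ := hgnp ξ
  have hd2 : (deriv G ξ) ^ 2 ≤ 80 / 51 * ε ^ 2 := by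
    have hG2 : (16:ℝ)/25 ≤ (G ξ) ^ 2 := by nlinarith
    have hε2 : ε ^ 2 ≤ 1/400 := by nlinarith
    nlinarith [mul_le_mul_of_nonneg_left
        (show (51:ℝ)/80 ≤ (G ξ)^2 - ε^2 by nlinarith) (sq_nonneg (deriv G ξ)),
      mul_le_mul_of_nonneg_left hGξ1 (sq_nonneg ε), sq_nonneg (deriv G ξ)]
  have hπ : Real.pi < 3.15 := Real.pi_lt_d2
  have hπ0 : 0 < Real.pi := Real.pi_pos
  have ht2 : (c - a) ^ 2 ≤ 3.15 ^ 2 := by nlinarith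
  have hdd : (deriv G ξ) ^ 2 * (c - a) ^ 2 ≤ (80 / 51 * ε ^ 2) * (3.15 ^ 2) := by
    have := mul_le_mul hd2 ht2 (sq_nonneg _) (by positivity)
    linarith
  have hε2' : 0 < ε ^ 2 := by positivity
  have : (80:ℝ) / 51 * ε ^ 2 * 3.15 ^ 2 < 16 * ε ^ 2 := by nlinarith
  linarith

/-- Analytic core of Lemma 2.7: a 2π-periodic differentiable radial graph function `G ≤ 1`
touching 1 and satisfying `(G G′)² ≤ ε²(G² + G′²)` verifies `G ≥ 1 − 4ε`. -/
theorem stmt_15 (ε : ℝ) (hε0 : 0 < ε) (hε : ε ≤ 1 / 20)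
    (G : ℝ → ℝ) (hG : Differentiable ℝ G)
    (hper : ∀ θ : ℝ, G (θ + 2 * Real.pi) = G θ)
    (hle : ∀ θ : ℝ, G θ ≤ 1)
    (htouch : ∃ θ₀ : ℝ, G θ₀ = 1)
    (hgnp : ∀ θ : ℝ, (G θ) ^ 2 * (deriv G θ) ^ 2 ≤ ε ^ 2 * ((G θ) ^ 2 + (deriv G θ) ^ 2)) :
    ∀ θ : ℝ, 1 - 4 * ε ≤ G θ := by
  intro θ
  obtain ⟨θ₀, hθ₀⟩ := htouch
  have hPer : Function.Periodic G (2 * Real.pi) := fun x => hper x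
  set k : ℤ := round ((θ - θ₀) / (2 * Real.pi)) with hk
  set a : ℝ := θ₀ + k * (2 * Real.pi) with hadef
  have hGa : G a = 1 := by
    rw [hadef]
    exact ((hPer.int_mul k) θ₀).trans hθ₀
  have h2π : (0:ℝ) < 2 * Real.pi := by positivity
  have hdist : |θ - a| ≤ Real.pi := by
    have h := abs_sub_round ((θ - θ₀) / (2 * Real.pi))
    have heq : ((θ - θ₀) / (2 * Real.pi) - k) * (2 * Real.pi) = θ - a := by
      field_simp [hadef]; ring
    have habs : |θ - a| = |(θ - θ₀) / (2 * Real.pi) - k| * (2 * Real.pi) := by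
      rw [← heq, abs_mul, abs_of_pos h2π]
    rw [habs]
    calc |(θ - θ₀) / (2 * Real.pi) - (k:ℝ)| * (2 * Real.pi)
        ≤ (1/2) * (2 * Real.pi) := mul_le_mul_of_nonneg_right h (le_of_lt h2π)
      _ = Real.pi := by ring
  rcases le_or_gt a θ with hcase | hcase
  · apply stmt_15_key ε hε0 hε G hG hle hgnp a θ hGa hcase
    have := abs_le.mp hdist
    linarith [this.2]
  · -- reflect: H t = G (2a - t)
    set H : ℝ → ℝ := fun t => G (2 * a - t) with hH
    have hderivH : ∀ t, deriv H t = -deriv G (2 * a - t) := by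
      intro t
      have h1 : HasDerivAt (fun t : ℝ => 2 * a - t) (-1) t := by
        simpa using (hasDerivAt_id t).const_sub (2 * a)
      have h2 : HasDerivAt H (deriv G (2 * a - t) * (-1)) t :=
        (hG (2 * a - t)).hasDerivAt.comp t h1
      rw [h2.deriv]; ring
    have hHdiff : Differentiable ℝ H := by
      intro t
      have h1 : HasDerivAt (fun t : ℝ => 2 * a - t) (-1) t := by
        simpa using (hasDerivAt_id t).const_sub (2 * a)
      exact ((hG (2 * a - t)).hasDerivAt.comp t h1).differentiableAt
    have key := stmt_15_key ε hε0 hε H hHdiff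
      (fun t => hle _)
      (by
        intro t
        have := hgnp (2 * a - t)
        simp only [hderivH]; simp only [hH]
        calc G (2 * a - t) ^ 2 * (-deriv G (2 * a - t)) ^ 2
            = G (2 * a - t) ^ 2 * (deriv G (2 * a - t)) ^ 2 := by ring
          _ ≤ ε ^ 2 * (G (2 * a - t) ^ 2 + (deriv G (2 * a - t)) ^ 2) := this
          _ = ε ^ 2 * (G (2 * a - t) ^ 2 + (-deriv G (2 * a - t)) ^ 2) := by ring)
      a (2 * a - θ)
      (by show G (2 * a - a) = 1; rw [show 2*a - a = a by ring]; exact hGa)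
      (by linarith)
      (by
        have := abs_le.mp hdist
        linarith [this.1])
    simp only [hH] at key
    rw [show 2 * a - (2 * a - θ) = θ by ring] at key
    exact key
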